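/- Segmented scan is expressible by ordinary scan: for lists a over a monoid (A,⊕,e) and a sorted tag list t over a type with decidable equality, define the operation ⊛ on A × T by (a,s) ⊛ (b,t) = (if s = t then a ⊕ b else b, t). Then ⊛ is associative on pairs whose tag components come from a sorted list, and the first components of scan(zip(a,t), ⊛) coincide with segscan(a, t, ⊕). -/

import Mathlib

/-- Inclusive scan: `scan f [x₁,…,xₙ] = [x₁, f x₁ x₂, …, f (… ) xₙ]`. -/
def scan {X : Type*} (f : X → X → X) : List X → List X
  | [] => []
  | x :: rest => scanGo x rest
where
  scanGo : X → List X → List X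
    | acc, [] => [acc]
    | acc, x :: rest => acc :: scanGo (f acc x) rest

/-- Segmented scan: inclusive prefix aggregation restarting whenever the tag changes. -/
def segscan {A T : Type*} [Mul A] [DecidableEq T] : List (A × T) → List A
  | [] => []
  | (a, t) :: rest => segscanGo a t rest
where
  segscanGo : A → T → List (A × T) → List A
    | acc, _, [] => [acc]
    | acc, s, (a, t) :: rest => acc :: segscanGo (if s = t then acc * a else a) t rest

/-- The combining operation `⊛` on weight–tag pairs. -/
def segOp {A T : Type*} [Mul A] [DecidableEq T] (p q : A × T) : A × T :=
  (if p.2 = q.2 then p.1 * q.1 else q.1, q.2)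


lemma scanGo_segscanGo {A T : Type*} [Monoid A] [DecidableEq T]
    (l : List (A × T)) : ∀ acc s,
    (scan.scanGo segOp (acc, s) l).map Prod.fst = segscan.segscanGo acc s l := by
  induction l with
  | nil => intro acc s; simp [scan.scanGo, segscan.segscanGo]
  | cons x rest ih =>
    intro acc s
    obtain ⟨b, u⟩ := x
    simp [scan.scanGo, segscan.segscanGo, segOp, ih]

/-- Segmented scan is expressible by ordinary scan: `⊛` is associative on pairs with
nondecreasing tags, and the first components of `scan ⊛ (zip a t)` coincide with
`segscan (zip a t)` for a sorted tag list `t`. -/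
theorem segscan_by_scan {A T : Type*} [Monoid A] [LinearOrder T]
    (a : List A) (t : List T) (hlen : a.length = t.length)
    (hsorted : t.Pairwise (· ≤ ·)) :
    (∀ p q r : A × T, p.2 ≤ q.2 → q.2 ≤ r.2 →
      segOp (segOp p q) r = segOp p (segOp q r)) ∧
    (scan segOp (a.zip t)).map Prod.fst = segscan (a.zip t) := by
  constructor
  · intro p q r hpq hqr
    obtain ⟨p1, p2⟩ := p; obtain ⟨q1, q2⟩ := q; obtain ⟨r1, r2⟩ := r
    simp only [segOp]
    by_cases h1 : p2 = q2 <;> by_cases h2 : q2 = r2 <;>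
      simp_all [mul_assoc]
    have : p2 ≠ r2 := fun h => h2 (le_antisymm hqr (h ▸ hpq))
    simp [this]
  · cases h : a.zip t with
    | nil => simp [scan, segscan]
    | cons x rest =>
      obtain ⟨b, u⟩ := x
      simp [scan, segscan, scanGo_segscanGo]
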